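/- arXiv:1306.6015 — 2 statements merged into one kernel-verified Lean document; each statement's English description precedes it below -/
import Mathlib

section
/- For a positive integer k, the number of monotone lattice paths from (a, a·k+j) to (m, n) staying weakly above y = kx, where 0 ≤ j ≤ k and n ≥ km, also equals C(m+n−(k+1)a, m−a) − k·C(m+n−(k+1)a, m−a−1). -/
open Finset

/-- A monotone lattice path from `s` to `t` using unit steps `(1,0)` and `(0,1)`. -/
def MonoPath (s t : ℤ × ℤ) (P : List (ℤ × ℤ)) : Prop :=
  P.head? = some s ∧ P.getLast? = some t ∧
  P.Chain' (fun p q => q = (p.1 + 1, p.2) ∨ q = (p.1, p.2 + 1))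

/-- Integer binomial coefficient, `0` for negative lower index. -/
def IC (x j : ℤ) : ℕ := if j < 0 then 0 else x.toNat.choose j.toNat

/-- Number of monotone lattice paths from `(a,b)` to `(m,n)` staying weakly above `y = kx - r`. -/
noncomputable def NW (k r a b m n : ℤ) : ℕ :=
  Set.ncard {P : List (ℤ × ℤ) | MonoPath (a, b) (m, n) P ∧ ∀ p ∈ P, k * p.1 - r ≤ p.2}

/-- Number of monotone lattice paths from `(a,b)` to `(m,n)` staying strictly above `y = kx - r`. -/
noncomputable def NS (k r a b m n : ℤ) : ℕ :=
  Set.ncard {P : List (ℤ × ℤ) | MonoPath (a, b) (m, n) P ∧ ∀ p ∈ P, k * p.1 - r < p.2}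

/-! ### Auxiliary: encoding paths by words over `Bool` -/

def stepf (p : ℤ × ℤ) (b : Bool) : ℤ × ℤ := if b then (p.1 + 1, p.2) else (p.1, p.2 + 1)

def wpath (s : ℤ × ℤ) (L : List Bool) : List (ℤ × ℤ) := List.scanl stepf s L

def wend (s : ℤ × ℤ) (L : List Bool) : ℤ × ℤ := List.foldl stepf s L

lemma wpath_nil (s : ℤ × ℤ) : wpath s [] = [s] := rfl

lemma wpath_cons (s : ℤ × ℤ) (b : Bool) (L : List Bool) :
    wpath s (b :: L) = s :: wpath (stepf s b) L := by
  simp [wpath, List.scanl]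

lemma wend_nil (s : ℤ × ℤ) : wend s [] = s := rfl

lemma wend_cons (s : ℤ × ℤ) (b : Bool) (L : List Bool) :
    wend s (b :: L) = wend (stepf s b) L := rfl

lemma wpath_ne_nil (s : ℤ × ℤ) (L : List Bool) : wpath s L ≠ [] := by
  cases L <;> simp [wpath_nil, wpath_cons]

lemma wpath_head? (s : ℤ × ℤ) (L : List Bool) : (wpath s L).head? = some s := by
  cases L <;> simp [wpath_nil, wpath_cons]

lemma wpath_getLast? (s : ℤ × ℤ) (L : List Bool) :
    (wpath s L).getLast? = some (wend s L) := by
  induction L generalizing s with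
  | nil => simp [wpath_nil, wend_nil]
  | cons b L ih =>
    rw [wpath_cons, wend_cons]
    obtain ⟨x, M, hx⟩ := List.exists_cons_of_ne_nil (wpath_ne_nil (stepf s b) L)
    rw [hx, List.getLast?_cons_cons, ← hx, ih]

lemma wend_mem_wpath (s : ℤ × ℤ) (L : List Bool) : wend s L ∈ wpath s L := by
  obtain ⟨h, h2⟩ := List.mem_getLast?_eq_getLast (l := wpath s L) (x := wend s L)
    (by simp [Option.mem_def, wpath_getLast?])
  rw [h2]
  exact List.getLast_mem h

lemma wpath_chain' (s : ℤ × ℤ) (L : List Bool) :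
    (wpath s L).Chain' (fun p q => q = (p.1 + 1, p.2) ∨ q = (p.1, p.2 + 1)) := by
  induction L generalizing s with
  | nil => simp [wpath_nil]; exact List.isChain_singleton _
  | cons b L ih =>
    rw [wpath_cons]
    refine List.isChain_cons.2 ⟨?_, ih _⟩
    intro y hy
    have : y = stepf s b := by
      rw [wpath_head? (stepf s b) L] at hy
      exact (Option.some_inj.1 hy).symm
    subst this
    cases b <;> simp [stepf]

lemma monoPath_wpath (s : ℤ × ℤ) (L : List Bool) : MonoPath s (wend s L) (wpath s L) :=
  ⟨wpath_head? s L, wpath_getLast? s L, wpath_chain' s L⟩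

lemma exists_word : ∀ (P : List (ℤ × ℤ)) (s t : ℤ × ℤ), P.head? = some s →
    P.getLast? = some t →
    P.Chain' (fun p q => q = (p.1 + 1, p.2) ∨ q = (p.1, p.2 + 1)) →
    ∃ L, P = wpath s L ∧ wend s L = t := by
  intro P
  induction P with
  | nil => intro s t h1; simp at h1
  | cons p Q ih =>
    intro s t h1 h2 h3
    have hp : s = p := by simpa using h1.symm
    subst hp
    cases Q with
    | nil =>
      have : s = t := by simpa using h2
      exact ⟨[], by simp [wpath_nil], by simp [wend_nil, this]⟩
    | cons q R =>
      have hstep : q = (s.1 + 1, s.2) ∨ q = (s.1, s.2 + 1) := (List.isChain_cons_cons.1 h3).1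
      have h2' : (q :: R).getLast? = some t := by
        rw [← List.getLast?_cons_cons (a := s)]; exact h2
      have h3' : (q :: R).Chain' _ := (List.isChain_cons_cons.1 h3).2
      obtain ⟨L, hQ, hend⟩ := ih q t (by simp) h2' h3'
      obtain ⟨b, hb⟩ : ∃ b, stepf s b = q := by
        rcases hstep with h | h
        · exact ⟨true, by rw [h]; simp [stepf]⟩
        · exact ⟨false, by rw [h]; simp [stepf]⟩
      refine ⟨b :: L, ?_, ?_⟩
      · rw [wpath_cons, hb, ← hQ]
      · rw [wend_cons, hb, hend]

lemma wpath_injective (s : ℤ × ℤ) : Function.Injective (wpath s) := by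
  intro L1 L2 h
  induction L1 generalizing s L2 with
  | nil =>
    cases L2 with
    | nil => rfl
    | cons c N =>
      rw [wpath_nil, wpath_cons] at h
      injection h with hh ht
      exact absurd ht.symm (wpath_ne_nil _ _)
  | cons b M ih =>
    cases L2 with
    | nil =>
      rw [wpath_nil, wpath_cons] at h
      injection h with hh ht
      exact absurd ht (wpath_ne_nil _ _)
    | cons c N =>
      rw [wpath_cons, wpath_cons] at h
      have htl : wpath (stepf s b) M = wpath (stepf s c) N := by
        injection h
      have hhead : stepf s b = stepf s c := by
        have h1 := wpath_head? (stepf s b) M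
        rw [htl, wpath_head? (stepf s c) N] at h1
        exact (Option.some_inj.1 h1).symm
      have hbc : b = c := by
        cases b <;> cases c <;> simp_all [stepf] <;> omega
      subst hbc
      rw [ih _ htl]

lemma wend_eq (s : ℤ × ℤ) (L : List Bool) :
    wend s L = (s.1 + L.count true, s.2 + L.count false) := by
  induction L generalizing s with
  | nil => simp [wend_nil]
  | cons b L ih =>
    rw [wend_cons, ih]
    cases b <;> simp [stepf, List.count_cons, Prod.ext_iff] <;> push_cast <;> omega

lemma count_tf (L : List Bool) : L.count true + L.count false = L.length := by
  induction L with
  | nil => simp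
  | cons b L ih => cases b <;> simp [List.count_cons] <;> omega

lemma wend_concat (s : ℤ × ℤ) (L : List Bool) (b : Bool) :
    wend s (L ++ [b]) = stepf (wend s L) b := by
  simp [wend, List.foldl_append]

lemma wpath_concat (s : ℤ × ℤ) (L : List Bool) (b : Bool) :
    wpath s (L ++ [b]) = wpath s L ++ [stepf (wend s L) b] := by
  induction L generalizing s with
  | nil => simp [wpath_nil, wpath_cons, wend_nil]
  | cons c L ih =>
    rw [List.cons_append, wpath_cons, ih, wpath_cons, wend_cons, List.cons_append]

lemma mem_wpath {p s : ℤ × ℤ} {L : List Bool} (h : p ∈ wpath s L) :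
    ∃ L1 L2, L = L1 ++ L2 ∧ p = wend s L1 := by
  induction L generalizing s with
  | nil =>
    rw [wpath_nil] at h
    exact ⟨[], [], rfl, by simp [wend_nil]; simpa using h⟩
  | cons b L ih =>
    rw [wpath_cons] at h
    rcases List.mem_cons.1 h with h | h
    · exact ⟨[], b :: L, rfl, by simp [wend_nil, h]⟩
    · obtain ⟨L1, L2, hL, hp⟩ := ih (s := stepf s b) h
      exact ⟨b :: L1, L2, by rw [List.cons_append, hL], by rw [wend_cons, hp]⟩

/-! ### The word-level path sets -/

def WS (k a b m n : ℤ) : Set (List Bool) :=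
  {L | wend (a, b) L = (m, n) ∧ ∀ p ∈ wpath (a, b) L, k * p.1 ≤ p.2}

lemma NW_eq_WS (k a b m n : ℤ) : NW k 0 a b m n = (WS k a b m n).ncard := by
  have himg : {P : List (ℤ × ℤ) | MonoPath (a, b) (m, n) P ∧ ∀ p ∈ P, k * p.1 - 0 ≤ p.2}
      = wpath (a, b) '' WS k a b m n := by
    ext P
    constructor
    · rintro ⟨⟨h1, h2, h3⟩, hc⟩
      obtain ⟨L, hP, hend⟩ := exists_word P (a, b) (m, n) h1 h2 h3
      exact ⟨L, ⟨hend, fun p hp => by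
        have := hc p (hP ▸ hp); omega⟩, hP.symm⟩
    · rintro ⟨L, ⟨hend, hc⟩, rfl⟩
      exact ⟨hend ▸ monoPath_wpath (a, b) L, fun p hp => by have := hc p hp; omega⟩
  rw [NW, himg, Set.ncard_image_of_injective _ (wpath_injective (a, b))]

lemma WS_length {k a b m n : ℤ} {L : List Bool} (h : L ∈ WS k a b m n) :
    (L.length : ℤ) = m + n - a - b := by
  obtain ⟨hend, -⟩ := h
  rw [wend_eq] at hend
  have h1 : a + (L.count true : ℤ) = m := congrArg Prod.fst hend
  have h2 : b + (L.count false : ℤ) = n := congrArg Prod.snd hend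
  have h3 := count_tf L
  push_cast [← h3]
  omega

lemma WS_finite (k a b m n : ℤ) : (WS k a b m n).Finite := by
  apply Set.Finite.subset (List.finite_length_eq (α := Bool) (n := (m + n - a - b).toNat))
  intro L hL
  have := WS_length hL
  simp only [Set.mem_setOf_eq]
  omega

lemma WS_base (k a b n : ℤ) (hab : k * a ≤ b) (hbn : b ≤ n) :
    WS k a b a n = {List.replicate (n - b).toNat false} := by
  ext L
  simp only [Set.mem_singleton_iff]
  constructor
  · rintro ⟨hend, -⟩
    rw [wend_eq] at hend
    have h1 : a + (L.count true : ℤ) = a := congrArg Prod.fst hend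
    have h2 : b + (L.count false : ℤ) = n := congrArg Prod.snd hend
    have hct : L.count true = 0 := by omega
    have hlen : (L.length : ℤ) = n - b := by
      have := count_tf L; omega
    refine List.eq_replicate_iff.2 ⟨by omega, ?_⟩
    intro x hx
    cases x
    · rfl
    · exact absurd hx (List.count_eq_zero.1 hct)
  · rintro rfl
    constructor
    · rw [wend_eq]
      simp [List.count_replicate]
      omega
    · intro p hp
      obtain ⟨L1, L2, hL, hp⟩ := mem_wpath hp
      have hL1 : L1.count true = 0 := by
        have : L1.count true + L2.count true = (List.replicate (n - b).toNat false).count true := by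
          rw [hL, List.count_append]
        simp [List.count_replicate] at this
        omega
      rw [hp, wend_eq, hL1]
      have h0 : (0 : ℤ) ≤ (L1.count false : ℤ) := by positivity
      push_cast
      simp only [add_zero]
      omega

lemma WS_empty_of (k a b m n : ℤ) (h : n < k * m) : WS k a b m n = ∅ := by
  ext L
  simp only [Set.mem_empty_iff_false, iff_false]
  rintro ⟨hend, hc⟩
  have := hc (m, n) (hend ▸ wend_mem_wpath (a, b) L)
  simp only at this
  omega

lemma WS_decomp (k a b m n : ℤ) (hne : ((a : ℤ), b) ≠ (m, n)) (hcond : k * m ≤ n) :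
    WS k a b m n =
      (fun L => L ++ [true]) '' WS k a b (m - 1) n ∪
      (fun L => L ++ [false]) '' WS k a b m (n - 1) := by
  ext L
  constructor
  · rintro ⟨hend, hc⟩
    rcases List.eq_nil_or_concat L with rfl | ⟨M, c, rfl⟩
    · exact absurd hend hne
    rw [List.concat_eq_append] at *
    rw [wend_concat] at hend
    have hcM : ∀ p ∈ wpath (a, b) M, k * p.1 ≤ p.2 := by
      intro p hp
      exact hc p (by rw [wpath_concat]; exact List.mem_append_left _ hp)
    cases c
    · right
      refine ⟨M, ⟨?_, hcM⟩, rfl⟩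
      simp only [stepf, if_neg (by simp : ¬(false : Bool) = true)] at hend
      have h1 : (wend (a, b) M).1 = m := congrArg Prod.fst hend
      have h2 : (wend (a, b) M).2 + 1 = n := congrArg Prod.snd hend
      exact Prod.ext h1 (by omega)
    · left
      refine ⟨M, ⟨?_, hcM⟩, rfl⟩
      simp only [stepf, if_pos rfl] at hend
      have h1 : (wend (a, b) M).1 + 1 = m := congrArg Prod.fst hend
      have h2 : (wend (a, b) M).2 = n := congrArg Prod.snd hend
      exact Prod.ext (by omega) h2
  · rintro (⟨M, ⟨hend, hcM⟩, rfl⟩ | ⟨M, ⟨hend, hcM⟩, rfl⟩)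
    · have he : stepf ((m : ℤ) - 1, n) true = (m, n) := by
        show ((m : ℤ) - 1 + 1, n) = (m, n)
        rw [Prod.mk.injEq]
        exact ⟨by ring, rfl⟩
      refine ⟨by rw [wend_concat, hend, he], ?_⟩
      intro p hp
      rw [wpath_concat, hend, he] at hp
      rcases List.mem_append.1 hp with hp | hp
      · exact hcM p hp
      · rw [List.mem_singleton.1 hp]
        exact hcond
    · have he : stepf ((m : ℤ), n - 1) false = (m, n) := by
        show ((m : ℤ), n - 1 + 1) = (m, n)
        rw [Prod.mk.injEq]
        exact ⟨rfl, by ring⟩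
      refine ⟨by rw [wend_concat, hend, he], ?_⟩
      intro p hp
      rw [wpath_concat, hend, he] at hp
      rcases List.mem_append.1 hp with hp | hp
      · exact hcM p hp
      · rw [List.mem_singleton.1 hp]
        exact hcond

lemma WS_ncard_rec (k a b m n : ℤ) (hne : ((a : ℤ), b) ≠ (m, n)) (hcond : k * m ≤ n) :
    (WS k a b m n).ncard = (WS k a b (m - 1) n).ncard + (WS k a b m (n - 1)).ncard := by
  rw [WS_decomp k a b m n hne hcond]
  have hinj1 : Function.Injective (fun L : List Bool => L ++ [true]) :=
    fun L1 L2 h => by simpa using h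
  have hinj2 : Function.Injective (fun L : List Bool => L ++ [false]) :=
    fun L1 L2 h => by simpa using h
  have hdisj : Disjoint ((fun L => L ++ [true]) '' WS k a b (m - 1) n)
      ((fun L => L ++ [false]) '' WS k a b m (n - 1)) := by
    rw [Set.disjoint_left]
    rintro x ⟨M, -, rfl⟩ ⟨N, -, hN⟩
    have := congrArg List.getLast? hN
    simp at this
  rw [Set.ncard_union_eq hdisj ((WS_finite _ _ _ _ _).image _) ((WS_finite _ _ _ _ _).image _),
    Set.ncard_image_of_injective _ hinj1, Set.ncard_image_of_injective _ hinj2]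

/-! ### Binomial coefficient lemmas -/

lemma IC_zero (x : ℤ) : IC x 0 = 1 := by simp [IC]

lemma IC_neg {x j : ℤ} (h : j < 0) : IC x j = 0 := by simp [IC, h]

lemma IC_pascal {x : ℤ} (hx : 1 ≤ x) (j : ℤ) :
    IC x j = IC (x - 1) (j - 1) + IC (x - 1) j := by
  rcases lt_trichotomy j 0 with hj | rfl | hj
  · rw [IC_neg hj, IC_neg (by omega), IC_neg hj]
  · rw [IC_zero, IC_neg (by omega : (0:ℤ) - 1 < 0), IC_zero]
  · rw [IC, IC, IC, if_neg (by omega), if_neg (by omega), if_neg (by omega)]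
    have h1 : x.toNat = (x - 1).toNat + 1 := by omega
    have h2 : j.toNat = (j - 1).toNat + 1 := by omega
    rw [h1, h2, Nat.choose_succ_succ]

lemma IC_ratio {k s : ℤ} (hk : 1 ≤ k) (hs : 1 ≤ s) :
    (IC ((k + 1) * s - 1) s : ℤ) = k * (IC ((k + 1) * s - 1) (s - 1) : ℤ) := by
  have htop : (0:ℤ) ≤ (k + 1) * s - 1 := by nlinarith
  rw [IC, IC, if_neg (by omega), if_neg (by omega)]
  set t := ((k + 1) * s - 1).toNat with ht
  set sn := s.toNat with hsn
  have hsn1 : 1 ≤ sn := by omega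
  have hs1 : (s - 1).toNat = sn - 1 := by omega
  have hkc : ((k.toNat : ℤ)) = k := Int.toNat_of_nonneg (by omega)
  have hsc : ((sn : ℤ)) = s := Int.toNat_of_nonneg (by omega)
  have htv : t = (k.toNat + 1) * sn - 1 := by
    have h1 : (((k.toNat + 1) * sn : ℕ) : ℤ) = (k + 1) * s := by push_cast [hkc, hsc]; ring
    omega
  have hsub : t - (sn - 1) = k.toNat * sn := by
    have h2 : (k.toNat + 1) * sn = k.toNat * sn + sn := by ring
    omega
  have key : t.choose sn * sn = t.choose (sn - 1) * (k.toNat * sn) := by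
    have h := Nat.choose_succ_right_eq t (sn - 1)
    rw [Nat.sub_add_cancel hsn1] at h
    rw [h, hsub]
  have hfin : t.choose sn = k.toNat * t.choose (sn - 1) := by
    refine Nat.eq_of_mul_eq_mul_right (by omega : 0 < sn) ?_
    rw [key]; ring
  rw [hs1, hfin]
  push_cast
  rw [hkc]

/-! ### Main induction -/

lemma key_count (k : ℤ) (hk : 1 ≤ k) :
    ∀ N : ℕ, ∀ a j m n : ℤ, 0 ≤ a → a ≤ m → k * m ≤ n → 0 ≤ j → j ≤ k →
      k * a + j ≤ n → (m + n - a - (k * a + j)).toNat = N →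
      ((WS k a (k * a + j) m n).ncard : ℤ) =
        (IC (m + n - (k + 1) * a) (m - a) : ℤ)
          - k * (IC (m + n - (k + 1) * a) (m - a - 1) : ℤ) := by
  intro N
  induction N using Nat.strong_induction_on with
  | _ N IH =>
  intro a j m n ha ham hn hj0 hjk hbn hN
  have hka : k * a ≤ k * m := by
    apply mul_le_mul_of_nonneg_left ham (by omega)
  rcases eq_or_lt_of_le ham with rfl | ham'
  · -- base case m = a
    rw [WS_base k a (k * a + j) n (by omega) hbn, Set.ncard_singleton]
    have h1 : a + n - (k + 1) * a = n - k * a := by ring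
    have h2 : a - a = 0 := by ring
    rw [h1, h2, IC_zero, IC_neg (by omega : (0:ℤ) - 1 < 0)]
    push_cast
    ring
  · -- inductive step: a < m
    have hne : ((a : ℤ), k * a + j) ≠ (m, n) := by
      intro h
      have := congrArg Prod.fst h
      simp only at this
      omega
    have hkm1 : k * (m - 1) ≤ n - k := by
      have : k * (m - 1) = k * m - k := by ring
      omega
    rw [WS_ncard_rec k a (k * a + j) m n hne hn]
    have hstep1 : (m - 1 + n - a - (k * a + j)).toNat < N := by omega
    have hb_le : k * a + j ≤ k * m := by
      have : k * a + k ≤ k * m := by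
        have : k * (a + 1) ≤ k * m := mul_le_mul_of_nonneg_left (by omega) (by omega)
        linarith [this]
      omega
    have e1 : ((WS k a (k * a + j) (m - 1) n).ncard : ℤ) =
        (IC (m - 1 + n - (k + 1) * a) (m - 1 - a) : ℤ)
          - k * (IC (m - 1 + n - (k + 1) * a) (m - 1 - a - 1) : ℤ) :=
      IH _ hstep1 a j (m - 1) n ha (by omega) (by omega) hj0 hjk hbn rfl
    have htop : 1 ≤ m + n - (k + 1) * a := by
      have hna : k * a ≤ n := le_trans hka hn
      have : m + n - (k + 1) * a = (m - a) + (n - k * a) := by ring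
      omega
    have htop' : m + n - (k + 1) * a - 1 = m - 1 + n - (k + 1) * a := by ring
    rcases eq_or_lt_of_le hn with hnkm | hn'
    · -- n = k * m
      have hempty : WS k a (k * a + j) m (n - 1) = ∅ :=
        WS_empty_of _ _ _ _ _ (by omega)
      rw [hempty, Set.ncard_empty]
      have hidx : m - 1 - a = m - a - 1 := by ring
      rw [hidx] at e1
      have hs : 1 ≤ m - a := by omega
      have hratio := IC_ratio hk hs
      have hx1 : (k + 1) * (m - a) - 1 = m - 1 + n - (k + 1) * a := by rw [← hnkm]; ring
      rw [hx1] at hratio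
      push_cast
      rw [e1]
      rw [IC_pascal htop (m - a), IC_pascal htop (m - a - 1), htop']
      push_cast
      rw [hratio]
      ring
    · -- n > k * m
      have hstep2 : (m + (n - 1) - a - (k * a + j)).toNat < N := by omega
      have e2 : ((WS k a (k * a + j) m (n - 1)).ncard : ℤ) =
          (IC (m + (n - 1) - (k + 1) * a) (m - a) : ℤ)
            - k * (IC (m + (n - 1) - (k + 1) * a) (m - a - 1) : ℤ) :=
        IH _ hstep2 a j m (n - 1) ha (by omega) (by omega) hj0 hjk (by omega) rfl
      have hB : m - 1 + n - (k + 1) * a = m + (n - 1) - (k + 1) * a := by ring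
      have hidx : m - 1 - a = m - a - 1 := by ring
      rw [hB, hidx] at e1
      push_cast
      rw [e1, e2]
      rw [IC_pascal htop (m - a), IC_pascal htop (m - a - 1)]
      have hA : m + n - (k + 1) * a - 1 = m + (n - 1) - (k + 1) * a := by ring
      rw [hA]
      push_cast
      ring

theorem stmt2 (k a j m n : ℤ) (hk : 1 ≤ k) (hm : 1 ≤ m) (ha : 0 ≤ a) (ham : a ≤ m)
    (hn : k * m ≤ n) (hj0 : 0 ≤ j) (hjk : j ≤ k) (hbn : k * a + j ≤ n) :
    (NW k 0 a (k * a + j) m n : ℤ) =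
      (IC (m + n - (k + 1) * a) (m - a) : ℤ) - k * (IC (m + n - (k + 1) * a) (m - a - 1) : ℤ) := by
  rw [NW_eq_WS]
  exact key_count k hk _ a j m n ha ham hn hj0 hjk hbn rfl
end

section
/- Let k, r, a, b, m, n be integers with k ≥ 1, 0 ≤ a ≤ m, max{0, ka − r} < b ≤ n, and n > km − r. Then the number of monotone lattice paths from (a,b) to (m,n) staying strictly above y = kx − r equals the sum over i from 0 to ⌊(b+r−1−ka)/(k+1)⌋ of (−1)^i · ((n+r−km)/(m+n+r−(k+1)(a+i))) · C(m+n+r−(k+1)(a+i), m−a−i) · C(b+r−1−k(a+i), i). -/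
open Finset

lemma monoPath_cases {s t : ℤ × ℤ} {P : List (ℤ × ℤ)} (h : MonoPath s t P) :
    (P = [s] ∧ s = t) ∨
    ∃ Q u, P = Q ++ [t] ∧ MonoPath s u Q ∧ (t = (u.1 + 1, u.2) ∨ t = (u.1, u.2 + 1)) := by
  obtain ⟨h1, h2, h3⟩ := h
  induction P using List.reverseRecOn with
  | nil => simp at h1
  | append_singleton Q x _ =>
    have hx : x = t := by
      rw [List.getLast?_append] at h2; simpa using h2
    subst hx
    rcases Q with _ | ⟨y, Q'⟩
    · left
      simp only [List.nil_append, List.head?_cons] at h1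
      have hst : s = x := by injection h1 with h; exact h.symm
      exact ⟨by rw [hst]; rfl, hst⟩
    · right
      set Q := y :: Q' with hQdef
      obtain ⟨u, hu⟩ : ∃ u, Q.getLast? = some u :=
        ⟨Q.getLast (by simp), List.getLast?_eq_getLast _⟩
      rw [show List.Chain' = List.IsChain from rfl, List.isChain_append] at h3
      refine ⟨Q, u, rfl, ⟨?_, hu, h3.1⟩, ?_⟩
      · rw [List.head?_append] at h1; simpa [hQdef] using h1
      · exact h3.2.2 u hu x (by simp)

lemma monoPath_facts {s : ℤ × ℤ} {P : List (ℤ × ℤ)} :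
    ∀ {t : ℤ × ℤ}, MonoPath s t P →
      s.1 ≤ t.1 ∧ s.2 ≤ t.2 ∧ (P.length : ℤ) = t.1 + t.2 - s.1 - s.2 + 1 ∧
      ∀ p ∈ P, s.1 ≤ p.1 ∧ s.2 ≤ p.2 ∧ p.1 ≤ t.1 ∧ p.2 ≤ t.2 := by
  induction P using List.reverseRecOn with
  | nil => intro t h; simp [MonoPath] at h
  | append_singleton Q x IH =>
    intro t h
    rcases monoPath_cases h with ⟨hP, rfl⟩ | ⟨Q', u, hP, hQ, hstep⟩
    · have hQx : Q = [] ∧ x = s := by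
        constructor
        · cases Q with
          | nil => rfl
          | cons a Q'' => exfalso; have := congrArg List.length hP; simp at this
        · have := congrArg List.getLast? hP; simpa using this
      obtain ⟨rfl, rfl⟩ := hQx
      refine ⟨le_refl _, le_refl _, by simp, ?_⟩
      intro p hp; simp at hp; subst hp; omega
    · have hQQ : Q' = Q ∧ x = t := by
        constructor
        · have := congrArg List.dropLast hP; simpa using this.symm
        · have := congrArg List.getLast? hP; simpa using this
      obtain ⟨rfl, rfl⟩ := hQQ
      obtain ⟨e1, e2, e3, e4⟩ := IH hQ
      have hu1 : u.1 ≤ x.1 ∧ u.2 ≤ x.2 ∧ u.1 + u.2 + 1 = x.1 + x.2 := by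
        rcases hstep with h' | h' <;> rw [h'] <;> constructor <;> simp <;> omega
      refine ⟨by omega, by omega, by simp; push_cast; omega, ?_⟩
      intro p hp
      rcases List.mem_append.1 hp with hp | hp
      · have := e4 p hp; omega
      · simp at hp; subst hp; omega

lemma monoPath_self {s t : ℤ × ℤ} {P : List (ℤ × ℤ)} (h : MonoPath s t P) (hst : s = t) :
    P = [s] := by
  rcases monoPath_cases h with ⟨hP, _⟩ | ⟨Q, u, hP, hQ, hstep⟩
  · exact hP
  · exfalso
    obtain ⟨e1, e2, _, _⟩ := monoPath_facts hQ
    subst hst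
    rcases hstep with h' | h' <;>
      · have h1 := congrArg Prod.fst h'
        have h2 := congrArg Prod.snd h'
        simp at h1 h2
        omega

lemma monoPath_singleton (s : ℤ × ℤ) : MonoPath s s [s] := by
  refine ⟨rfl, rfl, ?_⟩; exact List.isChain_singleton _

lemma monoPath_mem_last {s t : ℤ × ℤ} {P : List (ℤ × ℤ)} (h : MonoPath s t P) : t ∈ P := by
  rcases monoPath_cases h with ⟨hP, rfl⟩ | ⟨Q, u, hP, _, _⟩
  · rw [hP]; simp
  · rw [hP]; simp

lemma monoPath_append {s u t : ℤ × ℤ} {Q : List (ℤ × ℤ)} (h : MonoPath s u Q)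
    (hstep : t = (u.1 + 1, u.2) ∨ t = (u.1, u.2 + 1)) :
    MonoPath s t (Q ++ [t]) := by
  obtain ⟨h1, h2, h3⟩ := h
  have hQne : Q ≠ [] := by rintro rfl; simp at h1
  refine ⟨?_, ?_, ?_⟩
  · rw [List.head?_append]
    cases Q with
    | nil => exact absurd rfl hQne
    | cons a Q' => simpa using h1
  · rw [List.getLast?_append]; simp
  · rw [show List.Chain' = List.IsChain from rfl, List.isChain_append]
    refine ⟨h3, by simp, ?_⟩
    intro x hx y hy
    simp at hy
    subst hy
    rw [h2] at hx
    simp at hx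
    subst hx
    exact hstep

/-- lists of fixed length with entries in a finite set form a finite set -/
lemma finite_lists {α : Type*} {S : Set α} (hS : S.Finite) (L : ℕ) :
    {l : List α | l.length = L ∧ ∀ x ∈ l, x ∈ S}.Finite := by
  haveI : Finite S := hS
  have h1 : {l : List S | l.length = L}.Finite := List.finite_length_eq _ L
  have h2 := h1.image (List.map (Subtype.val : S → α))
  refine Set.Finite.subset h2 ?_
  rintro l ⟨hl, hmem⟩
  refine ⟨l.attach.map (fun x => (⟨x.1, hmem x.1 x.2⟩ : S)), by simp [hl], ?_⟩
  rw [List.map_map]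
  have : (Subtype.val ∘ fun x : {x // x ∈ l} => (⟨x.1, hmem x.1 x.2⟩ : S)) = fun x : {x // x ∈ l} => x.1 := rfl
  rw [this]
  exact List.attach_map_subtype_val l

lemma NS_set_finite (k r a b m n : ℤ) :
    {P : List (ℤ × ℤ) | MonoPath (a, b) (m, n) P ∧ ∀ p ∈ P, k * p.1 - r < p.2}.Finite := by
  apply Set.Finite.subset (finite_lists (Set.finite_Icc (a, b) (m, n))
    (m + n - a - b + 1).toNat)
  rintro P ⟨hP, -⟩
  obtain ⟨e1, e2, e3, e4⟩ := monoPath_facts hP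
  refine ⟨by omega, ?_⟩
  intro p hp
  have := e4 p hp
  simp only [Set.mem_Icc, Prod.le_def]
  exact ⟨⟨this.1, this.2.1⟩, this.2.2.1, this.2.2.2⟩

lemma NS_base {k r a b : ℤ} (h : k * a - r < b) : NS k r a b a b = 1 := by
  have : {P : List (ℤ × ℤ) | MonoPath (a, b) (a, b) P ∧ ∀ p ∈ P, k * p.1 - r < p.2}
      = {[((a : ℤ), (b : ℤ))]} := by
    ext P
    simp only [Set.mem_setOf_eq, Set.mem_singleton_iff]
    constructor
    · rintro ⟨hP, -⟩; exact monoPath_self hP rfl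
    · rintro rfl
      refine ⟨monoPath_singleton _, ?_⟩
      intro p hp; simp at hp; subst hp; simpa using h
  rw [NS, this, Set.ncard_singleton]

lemma NS_empty_of_lt {k r a b m n : ℤ} (h : m < a ∨ n < b) : NS k r a b m n = 0 := by
  have : {P : List (ℤ × ℤ) | MonoPath (a, b) (m, n) P ∧ ∀ p ∈ P, k * p.1 - r < p.2} = ∅ := by
    ext P
    simp only [Set.mem_setOf_eq, Set.mem_empty_iff_false, iff_false]
    rintro ⟨hP, -⟩
    obtain ⟨e1, e2, -, -⟩ := monoPath_facts hP
    simp at e1 e2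
    omega
  rw [NS, this, Set.ncard_empty]

lemma NS_empty_of_line {k r a b m n : ℤ} (h : n ≤ k * m - r) : NS k r a b m n = 0 := by
  have : {P : List (ℤ × ℤ) | MonoPath (a, b) (m, n) P ∧ ∀ p ∈ P, k * p.1 - r < p.2} = ∅ := by
    ext P
    simp only [Set.mem_setOf_eq, Set.mem_empty_iff_false, iff_false]
    rintro ⟨hP, hcond⟩
    have := hcond (m, n) (monoPath_mem_last hP)
    simp at this
    omega
  rw [NS, this, Set.ncard_empty]

lemma NS_rec {k r a b m n : ℤ} (hne : ¬(m = a ∧ n = b)) (hline : k * m - r < n) :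
    NS k r a b m n = NS k r a b (m - 1) n + NS k r a b m (n - 1) := by
  set A := {P : List (ℤ × ℤ) | MonoPath (a, b) (m - 1, n) P ∧ ∀ p ∈ P, k * p.1 - r < p.2}
  set B := {P : List (ℤ × ℤ) | MonoPath (a, b) (m, n - 1) P ∧ ∀ p ∈ P, k * p.1 - r < p.2}
  have himg : {P : List (ℤ × ℤ) | MonoPath (a, b) (m, n) P ∧ ∀ p ∈ P, k * p.1 - r < p.2}
      = (fun Q => Q ++ [((m : ℤ), (n : ℤ))]) '' (A ∪ B) := by
    ext P
    simp only [Set.mem_setOf_eq, Set.mem_image, Set.mem_union]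
    constructor
    · rintro ⟨hP, hcond⟩
      rcases monoPath_cases hP with ⟨hP1, heq⟩ | ⟨Q, u, rfl, hQ, hstep⟩
      · exfalso; exact hne ⟨(congrArg Prod.fst heq).symm, (congrArg Prod.snd heq).symm⟩
      · refine ⟨Q, ?_, rfl⟩
        have hcondQ : ∀ p ∈ Q, k * p.1 - r < p.2 := fun p hp => hcond p (by simp [hp])
        rcases hstep with h' | h'
        · left
          have hu : u = (m - 1, n) := by
            have h1 := congrArg Prod.fst h'; have h2 := congrArg Prod.snd h'
            simp at h1 h2
            exact Prod.ext (by omega) (by omega)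
          exact ⟨hu ▸ hQ, hcondQ⟩
        · right
          have hu : u = (m, n - 1) := by
            have h1 := congrArg Prod.fst h'; have h2 := congrArg Prod.snd h'
            simp at h1 h2
            exact Prod.ext (by omega) (by omega)
          exact ⟨hu ▸ hQ, hcondQ⟩
    · rintro ⟨Q, hQ, rfl⟩
      have : MonoPath (a, b) (m, n) (Q ++ [((m : ℤ), (n : ℤ))]) ∧
          ∀ p ∈ Q, k * p.1 - r < p.2 := by
        rcases hQ with ⟨hQ1, hQ2⟩ | ⟨hQ1, hQ2⟩
        · exact ⟨monoPath_append hQ1 (Or.inl (by simp)), hQ2⟩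
        · exact ⟨monoPath_append hQ1 (Or.inr (by simp)), hQ2⟩
      refine ⟨this.1, ?_⟩
      intro p hp
      rcases List.mem_append.1 hp with hp | hp
      · exact this.2 p hp
      · simp at hp; subst hp; simpa using hline
  have hinj : Function.Injective (fun Q : List (ℤ × ℤ) => Q ++ [((m : ℤ), (n : ℤ))]) := by
    intro x y hxy
    simpa using hxy
  have hdisj : Disjoint A B := by
    rw [Set.disjoint_left]
    rintro P ⟨hP1, -⟩ ⟨hP2, -⟩
    have h1 := hP1.2.1
    have h2 := hP2.2.1
    rw [h1] at h2
    simp at h2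
  rw [NS, himg, Set.ncard_image_of_injective _ hinj,
    Set.ncard_union_eq hdisj (NS_set_finite _ _ _ _ _ _) (NS_set_finite _ _ _ _ _ _)]
  rfl

lemma IC_nonneg {x j : ℤ} (h : 0 ≤ j) : IC x j = x.toNat.choose j.toNat := if_neg (by omega)

def pterm (k r a b m n : ℤ) (i : ℕ) : ℚ :=
  (-1 : ℚ) ^ i *
    (((n + r - k * m : ℤ) : ℚ) / ((m + n + r - (k + 1) * (a + (i : ℤ)) : ℤ) : ℚ)) *
    (IC (m + n + r - (k + 1) * (a + (i : ℤ))) (m - a - (i : ℤ)) : ℚ) *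
    (IC (b + r - 1 - k * (a + (i : ℤ))) (i : ℤ) : ℚ)

noncomputable def FF (k r a b m n : ℤ) : ℚ :=
  ∑ i ∈ Finset.range (((b + r - 1 - k * a) / (k + 1)).toNat + 1), pterm k r a b m n i

lemma FF_line {k r a b m n : ℤ} (h : n + r - k * m = 0) : FF k r a b m n = 0 := by
  apply Finset.sum_eq_zero
  intro i _
  unfold pterm
  rw [h]
  simp

lemma FF_left {k r a b n : ℤ} : FF k r a b (a - 1) n = 0 := by
  apply Finset.sum_eq_zero
  intro i _
  unfold pterm
  rw [IC_neg (by omega : a - 1 - a - (i : ℤ) < 0)]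
  simp

lemma FF_base {k r a b : ℤ} (hb2 : k * a - r < b) : FF k r a b a b = 1 := by
  rw [FF, Finset.sum_eq_single 0]
  · unfold pterm
    norm_num [IC_zero]
    rw [show ((a:ℚ) + b + r - ((k:ℚ)+1)*a) = ((b + r - k*a : ℤ):ℚ) from by push_cast; ring,
      show ((b:ℚ) + r - (k:ℚ)*a) = ((b + r - k*a : ℤ):ℚ) from by push_cast; ring]
    rw [div_self (Int.cast_ne_zero.mpr (by omega : (b + r - k * a : ℤ) ≠ 0))]
  · intro i _ hi
    unfold pterm
    rw [IC_neg (by omega : a - a - (i : ℤ) < 0)]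
    simp
  · intro h; simp at h

/-- the key rational Pascal identity, genuine-binomial case -/
lemma key_frac (k s c M : ℤ) (hk : 1 ≤ k) (hs : 1 ≤ s) (hc : 1 ≤ c) (hM : M = (k+1)*c + s)
    (X Y : ℚ) (hXY : (c : ℚ) * Y = ((M : ℚ) - c) * X) :
    ((s : ℚ) / M) * (X + Y) = (((s : ℚ) + k)/((M : ℚ) - 1)) * X + (((s : ℚ) - 1)/((M : ℚ) - 1)) * Y := by
  have hM0 : (M : ℚ) ≠ 0 := by
    have : (3:ℤ) ≤ M := by nlinarith
    exact_mod_cast (by omega : (M : ℤ) ≠ 0)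
  have hM1 : (M : ℚ) - 1 ≠ 0 := by
    have h3 : (3:ℤ) ≤ M := by nlinarith
    have : ((M:ℤ):ℚ) ≠ 1 := by exact_mod_cast (show M ≠ 1 by omega)
    exact sub_ne_zero.mpr this
  have hMq : (M : ℚ) = ((k : ℚ) + 1) * c + s := by exact_mod_cast congrArg (Int.cast : ℤ → ℚ) hM
  rw [div_mul_eq_mul_div, div_mul_eq_mul_div, div_mul_eq_mul_div, ← add_div,
    div_eq_div_iff hM0 hM1]
  linear_combination ((k:ℚ)+1)*hXY + (X+Y)*hMq

lemma pterm_pascal {k r a b m n : ℤ} (hk : 1 ≤ k) (i : ℕ)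
    (hi : (k + 1) * (i : ℤ) ≤ b + r - 1 - k * a)
    (hm : a ≤ m) (hn : b ≤ n) (hline : k * m - r < n) (hne : ¬(m = a ∧ n = b)) :
    pterm k r a b m n i = pterm k r a b (m - 1) n i + pterm k r a b m (n - 1) i := by
  unfold pterm
  set s := n + r - k * m with hs_def
  set M := m + n + r - (k + 1) * (a + (i : ℤ)) with hM_def
  set c := m - a - (i : ℤ) with hc_def
  set E := b + r - 1 - k * (a + (i : ℤ)) with hE_def
  rw [show n + r - k * (m - 1) = s + k from by rw [hs_def]; ring,
      show m - 1 + n + r - (k + 1) * (a + (i : ℤ)) = M - 1 from by rw [hM_def]; ring,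
      show m - 1 - a - (i : ℤ) = c - 1 from by rw [hc_def]; ring,
      show n - 1 + r - k * m = s - 1 from by rw [hs_def]; ring,
      show m + (n - 1) + r - (k + 1) * (a + (i : ℤ)) = M - 1 from by rw [hM_def]; ring]
  have hs1 : 1 ≤ s := by omega
  have hEi : (i : ℤ) ≤ E := by
    have : (k + 1) * (i : ℤ) = k * (i : ℤ) + i := by ring
    have hE' : E = b + r - 1 - k * a - k * i := by rw [hE_def]; ring
    omega
  have hMc : M = (k + 1) * c + s := by rw [hM_def, hc_def, hs_def]; ring
  rcases lt_trichotomy c 0 with hc | hc | hc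
  · simp [IC_neg hc, IC_neg (show c - 1 < 0 by omega)]
  · -- c = 0
    have hma : m = a + (i : ℤ) := by omega
    have hkm : k * m = k * a + k * (i : ℤ) := by rw [hma]; ring
    have hE' : E = b + r - 1 - k * a - k * (i : ℤ) := by rw [hE_def]; ring
    by_cases hs2 : s = 1
    · exfalso
      have h1 : n + r - k * m = 1 := by rw [← hs_def]; omega
      have hEb : E = b - n := by linarith
      have hi0 : (i : ℤ) = 0 := le_antisymm (by linarith) (Int.natCast_nonneg i)
      have hm' : m = a := by omega
      have hn' : n = b := by linarith
      exact hne ⟨hm', hn'⟩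
    · -- s ≥ 2
      have hM1 : M = s := by rw [hc] at hMc; simpa using hMc
      rw [hc, hM1, IC_neg (show (0 : ℤ) - 1 < 0 by norm_num), IC_zero, IC_zero]
      rw [div_self (by exact_mod_cast (by omega : s ≠ 0) : ((s:ℤ):ℚ) ≠ 0),
        div_self (by exact_mod_cast (by omega : s - 1 ≠ 0) : ((s - 1 : ℤ):ℚ) ≠ 0)]
      ring
  · -- c ≥ 1
    have hM3 : 3 ≤ M := by nlinarith
    have hcM1 : c + 1 ≤ M := by nlinarith
    set Mn := M.toNat with hMn
    set cn := c.toNat with hcn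
    have ecn : cn = (cn - 1) + 1 := by omega
    have eMn : Mn = (Mn - 1) + 1 := by omega
    have hcM : cn ≤ Mn - 1 := by omega
    rw [IC_nonneg (by omega : (0:ℤ) ≤ c), IC_nonneg (by omega : (0:ℤ) ≤ c - 1),
        IC_nonneg (by omega : (0:ℤ) ≤ c)]
    have targ1 : (M - 1).toNat = Mn - 1 := by omega
    have targ2 : (c - 1).toNat = cn - 1 := by omega
    rw [targ1, targ2]
    set X : ℚ := ((Mn - 1).choose (cn - 1) : ℚ) with hX
    set Y : ℚ := ((Mn - 1).choose cn : ℚ) with hY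
    have hpas : (Mn.choose cn : ℚ) = X + Y := by
      have h := Nat.choose_succ_succ' (Mn - 1) (cn - 1)
      rw [← eMn, ← ecn] at h
      rw [hX, hY, h]
      push_cast
      ring
    have hXY : (c : ℚ) * Y = ((M : ℚ) - c) * X := by
      have h0 := Nat.choose_succ_right_eq (Mn - 1) (cn - 1)
      rw [← ecn] at h0
      have hsub : Mn - 1 - (cn - 1) = Mn - cn := by omega
      rw [hsub] at h0
      have h0q := congrArg (Nat.cast : ℕ → ℚ) h0
      push_cast [Nat.cast_sub (show cn ≤ Mn by omega)] at h0q
      have hcq : ((cn : ℕ) : ℚ) = ((c : ℤ) : ℚ) := by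
        rw [show ((cn : ℕ) : ℚ) = ((cn : ℤ) : ℚ) from by push_cast; ring, hcn,
          Int.toNat_of_nonneg (le_of_lt hc)]
      have hMq : ((Mn : ℕ) : ℚ) = ((M : ℤ) : ℚ) := by
        rw [show ((Mn : ℕ) : ℚ) = ((Mn : ℤ) : ℚ) from by push_cast; ring, hMn,
          Int.toNat_of_nonneg (by omega : (0:ℤ) ≤ M)]
      rw [hX, hY]
      rw [hcq, hMq] at h0q
      linarith [h0q]
    have key := key_frac k s c M hk hs1 (by omega) hMc X Y hXY
    rw [hpas]
    have e1 : ((s + k : ℤ) : ℚ) = (s : ℚ) + k := by push_cast; ring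
    have e2 : ((s - 1 : ℤ) : ℚ) = (s : ℚ) - 1 := by push_cast; ring
    have e3 : ((M - 1 : ℤ) : ℚ) = (M : ℚ) - 1 := by push_cast; ring
    rw [e1, e2, e3]
    linear_combination ((-1 : ℚ)^i * (IC E i : ℚ)) * key

section FD
open Polynomial
open scoped fwdDiff

lemma fwdDiff_poly_eval (q : Polynomial ℚ) :
    (Δ_[(1:ℚ)]) (fun x : ℚ => q.eval x) = fun x => (q.comp (X + C 1) - q).eval x := by
  ext x
  simp [fwdDiff, Polynomial.eval_comp]

lemma degree_comp_sub_lt (q : Polynomial ℚ) (hq : q ≠ 0) :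
    (q.comp (X + C 1) - q).degree < q.degree := by
  have hdc : (q.comp (X + C 1)).natDegree = q.natDegree := by
    rw [Polynomial.natDegree_comp, Polynomial.natDegree_X_add_C, mul_one]
  have hlc : (q.comp (X + C 1)).leadingCoeff = q.leadingCoeff := by
    rw [Polynomial.leadingCoeff_comp (by rw [Polynomial.natDegree_X_add_C]; norm_num),
      Polynomial.leadingCoeff_X_add_C, one_pow, mul_one]
  have hne : q.comp (X + C 1) ≠ 0 := by
    intro h
    apply hq
    rw [← Polynomial.leadingCoeff_eq_zero, ← hlc, h, Polynomial.leadingCoeff_zero]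
  have hdeg : (q.comp (X + C 1)).degree = q.degree := by
    rw [Polynomial.degree_eq_natDegree hne, Polynomial.degree_eq_natDegree hq, hdc]
  have := Polynomial.degree_sub_lt hdeg hne hlc
  rwa [hdeg] at this

lemma fd_iter_zero : ∀ (N : ℕ) (q : Polynomial ℚ), q.degree < N →
    (Δ_[(1:ℚ)])^[N] (fun x : ℚ => q.eval x) = fun _ => (0 : ℚ) := by
  intro N
  induction N with
  | zero =>
    intro q hq
    have : q = 0 := by
      rw [← Polynomial.degree_eq_bot, ← Nat.WithBot.lt_zero_iff]
      exact_mod_cast hq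
    subst this
    ext x
    simp
  | succ N IH =>
    intro q hq
    rw [Function.iterate_succ_apply, fwdDiff_poly_eval]
    apply IH
    by_cases h0 : q = 0
    · subst h0
      simp only [Polynomial.zero_comp, sub_zero, Polynomial.degree_zero]
      exact lt_of_lt_of_le (WithBot.bot_lt_coe _) le_rfl
    · have h1 := degree_comp_sub_lt q h0
      have h2 : q.degree ≤ (N : ℕ) := by
        rw [Polynomial.degree_eq_natDegree h0] at hq ⊢
        exact_mod_cast (by exact_mod_cast Nat.lt_succ_iff.mp (by exact_mod_cast hq) : q.natDegree ≤ N)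
      exact lt_of_lt_of_le h1 h2

lemma fd_sum (N : ℕ) (q : Polynomial ℚ) (h : q.degree < N) :
    ∑ i ∈ range (N + 1), (-1 : ℚ) ^ i * (N.choose i : ℚ) * q.eval (i : ℚ) = 0 := by
  have h0 := fwdDiff_iter_eq_sum_shift (1 : ℚ) (fun x : ℚ => q.eval x) N 0
  rw [fd_iter_zero N q h] at h0
  have h1 : (0 : ℚ) = ∑ i ∈ range (N + 1),
      ((-1 : ℤ) ^ (N - i) * (N.choose i : ℤ)) • q.eval (0 + i • (1 : ℚ)) := h0
  have h2 : ∑ i ∈ range (N + 1), (-1 : ℚ) ^ i * (N.choose i : ℚ) * q.eval (i : ℚ)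
      = (-1 : ℚ) ^ N * ∑ i ∈ range (N + 1),
        ((-1 : ℤ) ^ (N - i) * (N.choose i : ℤ)) • q.eval (0 + i • (1 : ℚ)) := by
    rw [mul_sum]
    apply sum_congr rfl
    intro i hi
    have hiN : i ≤ N := by simp at hi; omega
    have hexp : N + (N - i) = 2 * (N - i) + i := by omega
    have hsgn : (-1 : ℚ) ^ N * (-1 : ℚ) ^ (N - i) = (-1 : ℚ) ^ i := by
      rw [← pow_add, hexp, pow_add, pow_mul]
      norm_num
    rw [zsmul_eq_mul, nsmul_eq_mul]
    push_cast
    rw [show (0 : ℚ) + (i : ℚ) * 1 = (i : ℚ) by ring]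
    linear_combination (-((N.choose i : ℚ) * q.eval (i : ℚ))) * hsgn
  rw [h2, ← h1, mul_zero]

end FD

open Polynomial in
lemma FF_bottom {k r a b m : ℤ} (hk : 1 ≤ k) (hm : a < m) (hsB : k * m - r < b - 1) :
    FF k r a b m (b - 1) = 0 := by
  set T : ℕ := ((b + r - 1 - k * a) / (k + 1)).toNat with hT
  set N : ℤ := m - a with hN
  set Nn : ℕ := N.toNat with hNn
  have hN1 : 1 ≤ N := by omega
  have hNn1 : 1 ≤ Nn := by omega
  have hs' : 1 ≤ b - 1 + r - k * m := by omega
  have hkN : k * m - k * a = k * N := by rw [hN]; ring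
  have hnum : 0 ≤ b + r - 1 - k * a := by nlinarith
  -- the descPochhammer values
  set dP : ℕ → ℚ := fun i =>
    (((descPochhammer ℤ (Nn - 1)).eval (m + (b - 1) + r - (k + 1) * (a + (i : ℤ)) - 1) : ℤ) : ℚ)
    with hdP
  set g : ℕ → ℚ := fun i => (-1 : ℚ) ^ i *
      (((b - 1 + r - k * m : ℤ) : ℚ) / (Nn.factorial : ℚ)) * ((Nn.choose i : ℕ) : ℚ) * dP i
    with hg
  have hfac : (Nn.factorial : ℚ) ≠ 0 := Nat.cast_ne_zero.mpr (Nat.factorial_ne_zero Nn)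
  -- pointwise: pterm agrees with g on the summation range
  have hpt : ∀ i ∈ Finset.range (T + 1), pterm k r a b m (b - 1) i = g i := by
    intro i hi
    simp only [Finset.mem_range] at hi
    have hTc : (T : ℤ) = (b + r - 1 - k * a) / (k + 1) := by
      rw [hT]; exact Int.toNat_of_nonneg (Int.ediv_nonneg hnum (by omega))
    have hiT : (i : ℤ) ≤ (b + r - 1 - k * a) / (k + 1) := by omega
    have hiE : (k + 1) * (i : ℤ) ≤ b + r - 1 - k * a := by
      rw [mul_comm]
      exact (Int.le_ediv_iff_mul_le (by omega : (0:ℤ) < k + 1)).mp hiT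
    unfold pterm
    set c : ℤ := m - a - (i : ℤ) with hc
    set E : ℤ := b + r - 1 - k * (a + (i : ℤ)) with hE
    set Mi : ℤ := m + (b - 1) + r - (k + 1) * (a + (i : ℤ)) with hMi
    have hE' : E = b + r - 1 - k * a - k * (i : ℤ) := by rw [hE]; ring
    have hk1i : (k + 1) * (i : ℤ) = k * (i : ℤ) + (i : ℤ) := by ring
    have hEi : (i : ℤ) ≤ E := by omega
    have hME : Mi = c + E := by rw [hMi, hc, hE]; ring
    have hcN : c = N - (i : ℤ) := by omega
    rcases lt_or_ge c 0 with hcneg | hcpos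
    · rw [IC_neg hcneg]
      have hch : Nn.choose i = 0 := Nat.choose_eq_zero_of_lt (by omega)
      simp [hg, hch]
    · have hMN : N ≤ Mi := by omega
      have hMi1 : 1 ≤ Mi := by omega
      rw [IC_nonneg hcpos, IC_nonneg (Int.natCast_nonneg i),
        show ((i : ℤ)).toNat = i from rfl]
      set Mn : ℕ := Mi.toNat with hMn
      set cn : ℕ := c.toNat with hcnd
      set En : ℕ := E.toNat with hEnd
      have hMcE : Mn = cn + En := by omega
      have hcnn : cn = Nn - i := by omega
      have hiNn : i ≤ Nn := by omega
      have hNM : Nn ≤ Mn := by omega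
      have hiEn : i ≤ En := by omega
      have hsymm : Nn.choose cn = Nn.choose i := by
        rw [show cn = Nn - i from by omega]
        exact Nat.choose_symm (by omega)
      have ch1 : Mn.choose Nn * Nn.choose i = Mn.choose cn * En.choose i := by
        have h0 := Nat.choose_mul (n := Mn) (show cn ≤ Nn by omega)
        rw [hsymm] at h0
        rw [h0, show Mn - cn = En from by omega, show Nn - cn = i from by omega]
      have ch2 : Nn.factorial * Mn.choose Nn = Mn * ((Mn - 1).descFactorial (Nn - 1)) := by
        have d1 := Nat.descFactorial_eq_factorial_mul_choose Mn Nn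
        have d2 : Mn.descFactorial Nn = Mn * (Mn - 1).descFactorial (Nn - 1) := by
          conv_lhs => rw [show Mn = (Mn - 1) + 1 from by omega, show Nn = (Nn - 1) + 1 from by omega]
          rw [Nat.succ_descFactorial_succ, show (Mn - 1) + 1 = Mn from by omega]
        omega
      have hdPv : dP i = (((Mn - 1).descFactorial (Nn - 1) : ℕ) : ℚ) := by
        rw [hdP]
        simp only []
        rw [show m + (b - 1) + r - (k + 1) * (a + (i : ℤ)) - 1 = ((Mn - 1 : ℕ) : ℤ) from by omega,
          descPochhammer_eval_eq_descFactorial ℤ (Mn - 1) (Nn - 1)]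
        push_cast
        ring
      have hMnq : ((Mn : ℕ) : ℚ) = ((Mi : ℤ) : ℚ) := by
        rw [show ((Mn : ℕ) : ℚ) = ((Mn : ℤ) : ℚ) from by push_cast; ring, hMn,
          Int.toNat_of_nonneg (by omega : (0:ℤ) ≤ Mi)]
      have c1 := congrArg (Nat.cast : ℕ → ℚ) ch1
      have c2 := congrArg (Nat.cast : ℕ → ℚ) ch2
      push_cast at c1 c2
      have key : ((Mn.choose cn : ℕ) : ℚ) * ((En.choose i : ℕ) : ℚ) * (Nn.factorial : ℚ)
          = ((Nn.choose i : ℕ) : ℚ) * (((Mn - 1).descFactorial (Nn - 1) : ℕ) : ℚ) * ((Mi : ℤ) : ℚ) := by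
        rw [← hMnq]
        linear_combination (-(Nn.factorial : ℚ)) * c1 + ((Nn.choose i : ℕ) : ℚ) * c2
      have hMi0 : ((Mi : ℤ) : ℚ) ≠ 0 := Int.cast_ne_zero.mpr (by omega)
      rw [hg]
      simp only []
      rw [hdPv]
      rw [show (-1 : ℚ) ^ i * (((b - 1 + r - k * m : ℤ) : ℚ) / ((Mi : ℤ) : ℚ)) *
            ((Mn.choose cn : ℕ) : ℚ) * ((En.choose i : ℕ) : ℚ)
          = ((-1 : ℚ) ^ i * ((b - 1 + r - k * m : ℤ) : ℚ) * (((Mn.choose cn : ℕ) : ℚ) * ((En.choose i : ℕ) : ℚ))) / ((Mi : ℤ) : ℚ) from by ring,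
        show (-1 : ℚ) ^ i * (((b - 1 + r - k * m : ℤ) : ℚ) / (Nn.factorial : ℚ)) *
            ((Nn.choose i : ℕ) : ℚ) * (((Mn - 1).descFactorial (Nn - 1) : ℕ) : ℚ)
          = ((-1 : ℚ) ^ i * ((b - 1 + r - k * m : ℤ) : ℚ) * (((Nn.choose i : ℕ) : ℚ) * (((Mn - 1).descFactorial (Nn - 1) : ℕ) : ℚ))) / (Nn.factorial : ℚ) from by ring,
        div_eq_div_iff hMi0 hfac]
      linear_combination ((-1 : ℚ) ^ i * ((b - 1 + r - k * m : ℤ) : ℚ)) * key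
  -- the polynomial
  set q : Polynomial ℚ := (descPochhammer ℚ (Nn - 1)).comp
      (Polynomial.C ((-(k + 1) : ℤ) : ℚ) * Polynomial.X +
       Polynomial.C (((m + (b - 1) + r - (k + 1) * a - 1 : ℤ)) : ℚ)) with hqd
  have hq : ∀ i : ℕ, dP i = q.eval (i : ℚ) := by
    intro i
    rw [hdP, hqd]
    simp only [Polynomial.eval_comp, Polynomial.eval_add, Polynomial.eval_mul,
      Polynomial.eval_C, Polynomial.eval_X]
    rw [descPochhammer_eval_cast ℚ (Nn - 1) (m + (b - 1) + r - (k + 1) * (a + (i : ℤ)) - 1)]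
    congr 1
    push_cast
    ring
  have hdeg : q.degree < (Nn : ℕ) := by
    have hd : ((-(k + 1) : ℤ) : ℚ) ≠ 0 := Int.cast_ne_zero.mpr (by omega)
    have hnd : q.natDegree = Nn - 1 := by
      rw [hqd, Polynomial.natDegree_comp, descPochhammer_natDegree,
        Polynomial.natDegree_linear hd, mul_one]
    calc q.degree ≤ (q.natDegree : WithBot ℕ) := Polynomial.degree_le_natDegree
      _ < (Nn : WithBot ℕ) := by
          rw [hnd]
          exact_mod_cast WithBot.coe_lt_coe.mpr (by omega : Nn - 1 < Nn)
  have hgza : ∀ i : ℕ, Nn < i → g i = 0 := by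
    intro i h
    simp [hg, Nat.choose_eq_zero_of_lt h]
  have hgzb : ∀ i : ℕ, T < i → i ≤ Nn → g i = 0 := by
    intro i hTi hiN
    have hdp0 : dP i = 0 := by
      set x : ℤ := m + (b - 1) + r - (k + 1) * (a + (i : ℤ)) - 1 with hx
      set cc : ℤ := N - (i : ℤ) with hcc
      have hcc0 : 0 ≤ cc := by omega
      have hkc : 0 ≤ k * cc := mul_nonneg (by omega) hcc0
      have hE2 : x = (k + 1) * cc + (b - 1 + r - k * m) - 1 := by
        rw [hx, hcc, hN]; ring
      have hx0 : 0 ≤ x := by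
        have : (k + 1) * cc = k * cc + cc := by ring
        omega
      have hTc : (T : ℤ) = (b + r - 1 - k * a) / (k + 1) := by
        rw [hT]; exact Int.toNat_of_nonneg (Int.ediv_nonneg hnum (by omega))
      have hlt : b + r - 1 - k * a < (i : ℤ) * (k + 1) := by
        rw [← Int.ediv_lt_iff_lt_mul (by omega : (0:ℤ) < k + 1)]
        omega
      have hxN : x ≤ N - 2 := by
        have e1 : x = cc + (b + r - 1 - k * a - k * (i : ℤ)) - 1 + k * m - k * a - k * N := by
          rw [hx, hcc, hN]; ring
        have e2 : (i : ℤ) * (k + 1) = k * (i : ℤ) + (i : ℤ) := by ring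
        omega
      rw [hdP]
      simp only []
      rw [← hx, show x = ((x.toNat : ℕ) : ℤ) from (Int.toNat_of_nonneg hx0).symm,
        descPochhammer_eval_eq_descFactorial ℤ x.toNat (Nn - 1),
        Nat.descFactorial_eq_zero_iff_lt.mpr (by omega : x.toNat < Nn - 1)]
      simp
    simp [hg, hdp0]
  have e1 : FF k r a b m (b - 1) = ∑ i ∈ Finset.range (T + 1), g i := by
    rw [FF, ← hT]
    exact Finset.sum_congr rfl hpt
  have e2 : ∑ i ∈ Finset.range (T + 1), g i = ∑ i ∈ Finset.range (max T Nn + 1), g i := by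
    apply Finset.sum_subset (Finset.range_subset_range.mpr (by omega))
    intro x hx hnx
    simp only [Finset.mem_range] at hx hnx
    rcases le_or_gt x Nn with h | h
    · exact hgzb x (by omega) h
    · exact hgza x h
  have e3 : ∑ i ∈ Finset.range (Nn + 1), g i = ∑ i ∈ Finset.range (max T Nn + 1), g i := by
    apply Finset.sum_subset (Finset.range_subset_range.mpr (by omega))
    intro x hx hnx
    simp only [Finset.mem_range] at hx hnx
    exact hgza x (by omega)
  have e4 : ∑ i ∈ Finset.range (Nn + 1), g i = 0 := by
    have hfd := fd_sum Nn q hdeg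
    have : ∀ i ∈ Finset.range (Nn + 1), g i
        = (((b - 1 + r - k * m : ℤ) : ℚ) / (Nn.factorial : ℚ)) *
          ((-1 : ℚ) ^ i * ((Nn.choose i : ℕ) : ℚ) * q.eval (i : ℚ)) := by
      intro i _
      rw [hg]
      simp only []
      rw [hq i]
      ring
    rw [Finset.sum_congr rfl this, ← Finset.mul_sum, hfd, mul_zero]
  rw [e1, e2, ← e3, e4]

lemma FF_pascal {k r a b m n : ℤ} (hk : 1 ≤ k) (hb2 : k * a - r < b)
    (hm : a ≤ m) (hn : b ≤ n) (hline : k * m - r < n) (hne : ¬(m = a ∧ n = b)) :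
    FF k r a b m n = FF k r a b (m - 1) n + FF k r a b m (n - 1) := by
  rw [FF, FF, FF, ← Finset.sum_add_distrib]
  apply Finset.sum_congr rfl
  intro i hi
  simp only [Finset.mem_range] at hi
  have hnum : 0 ≤ b + r - 1 - k * a := by omega
  have hTc : ((((b + r - 1 - k * a) / (k + 1)).toNat : ℕ) : ℤ) = (b + r - 1 - k * a) / (k + 1) :=
    Int.toNat_of_nonneg (Int.ediv_nonneg hnum (by omega))
  have hiT : (i : ℤ) ≤ (b + r - 1 - k * a) / (k + 1) := by omega
  have hiE : (k + 1) * (i : ℤ) ≤ b + r - 1 - k * a := by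
    rw [mul_comm]
    exact (Int.le_ediv_iff_mul_le (by omega : (0:ℤ) < k + 1)).mp hiT
  exact pterm_pascal hk i hiE hm hn hline hne

lemma main_induction {k r a b : ℤ} (hk : 1 ≤ k) (hb2 : k * a - r < b) :
    ∀ d : ℕ, ∀ m n : ℤ, a ≤ m → b ≤ n → k * m - r < n → (m - a + (n - b)).toNat ≤ d →
      (NS k r a b m n : ℚ) = FF k r a b m n := by
  intro d
  induction d with
  | zero =>
    intro m n hm hn hline hd
    have hmn : m = a ∧ n = b := by omega
    obtain ⟨rfl, rfl⟩ := hmn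
    rw [NS_base hb2, FF_base hb2]
    norm_num
  | succ d IH =>
    intro m n hm hn hline hd
    by_cases hne : m = a ∧ n = b
    · obtain ⟨rfl, rfl⟩ := hne
      rw [NS_base hb2, FF_base hb2]
      norm_num
    · rw [NS_rec hne hline]
      push_cast
      rw [FF_pascal hk hb2 hm hn hline hne]
      congr 1
      · rcases eq_or_lt_of_le hm with heq | hma
        · rw [NS_empty_of_lt (Or.inl (by omega : m - 1 < a)),
            show m - 1 = a - 1 by omega, FF_left]
          simp
        · have hkm : k * (m - 1) = k * m - k := by ring
          exact IH (m - 1) n (by omega) hn (by omega) (by omega)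
      · rcases lt_trichotomy (k * m - r) (n - 1) with h | h | h
        · rcases lt_or_ge (n - 1) b with hnb | hnb
          · have hma : a < m := by
              rcases eq_or_lt_of_le hm with heq | hlt
              · exact absurd ⟨heq.symm, by omega⟩ hne
              · exact hlt
            rw [NS_empty_of_lt (Or.inr (by omega : n - 1 < b)),
              show n - 1 = b - 1 by omega, FF_bottom hk hma (by omega)]
            simp
          · exact IH m (n - 1) hm hnb h (by omega)
        · rw [NS_empty_of_line (by omega), FF_line (by omega)]
          simp
        · omega


theorem stmt9 (k r a b m n : ℤ) (hk : 1 ≤ k) (ha : 0 ≤ a) (ham : a ≤ m)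
    (hb1 : 0 < b) (hb2 : k * a - r < b) (hbn : b ≤ n) (hn : k * m - r < n) :
    (NS k r a b m n : ℚ) =
      ∑ i ∈ Finset.range (((b + r - 1 - k * a) / (k + 1)).toNat + 1),
        (-1 : ℚ) ^ i *
          (((n + r - k * m : ℤ) : ℚ) / ((m + n + r - (k + 1) * (a + (i : ℤ)) : ℤ) : ℚ)) *
          (IC (m + n + r - (k + 1) * (a + (i : ℤ))) (m - a - (i : ℤ)) : ℚ) *
          (IC (b + r - 1 - k * (a + (i : ℤ))) (i : ℤ) : ℚ) := by
  have h := main_induction hk hb2 (m - a + (n - b)).toNat m n ham hbn hn le_rfl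
  rw [h, FF]
  rfl
end
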